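/- If A is an n×n real matrix satisfying |a_{ij}| ≤ ε·|a_{ii}| for all i ≠ j, 1 ≤ i,j ≤ n, where ε ≥ 0, then |det(A)| ≥ (∏_{i=1}^n |a_{ii}|) · (1 − (n−1)ε)(1 + ε)^{n−1}. -/

import Mathlib

open Matrix Finset

/-- One step of Gaussian elimination on the first column. -/
lemma det_elim_step {n : ℕ} (A : Matrix (Fin (n+2)) (Fin (n+2)) ℝ) (h0 : A 0 0 ≠ 0) :
    A.det = A 0 0 *
      (Matrix.of fun i j : Fin (n+1) =>
        A i.succ j.succ - A i.succ 0 / A 0 0 * A 0 j.succ).det := by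
  set L : Matrix (Fin (n+2)) (Fin (n+2)) ℝ :=
    Matrix.of fun i j => if i = j then 1 else if j = 0 then -(A i 0 / A 0 0) else 0 with hL
  have hLdet : L.det = 1 := by
    rw [Matrix.det_of_lowerTriangular L]
    · simp [hL]
    · intro i j hij
      have h1 : i ≠ j := by
        intro h; subst h; exact lt_irrefl _ hij
      have h2 : j ≠ 0 := by
        intro h; subst h; exact (Fin.not_lt_zero i) hij
      simp [hL, h1, h2]
  set N := L * A with hN
  have hNdet : N.det = A.det := by
    rw [hN, Matrix.det_mul, hLdet, one_mul]
  have hNrow0 : ∀ j, N 0 j = A 0 j := by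
    intro j
    rw [hN, Matrix.mul_apply]
    rw [Finset.sum_eq_single (0 : Fin (n+2))]
    · simp [hL]
    · intro k _ hk
      simp [hL, hk.symm, hk]
    · simp
  have hNrow : ∀ (i : Fin (n+1)) (j : Fin (n+2)),
      N i.succ j = A i.succ j - A i.succ 0 / A 0 0 * A 0 j := by
    intro i j
    rw [hN, Matrix.mul_apply]
    have hne : (i.succ : Fin (n+2)) ≠ 0 := Fin.succ_ne_zero i
    rw [← Finset.sum_subset (Finset.subset_univ ({i.succ, 0} : Finset (Fin (n+2))))]
    · rw [Finset.sum_pair hne]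
      simp [hL, hne, hne.symm]
      ring
    · intro k _ hk
      simp only [Finset.mem_insert, Finset.mem_singleton, not_or] at hk
      have h1 : (i.succ : Fin (n+2)) ≠ k := fun h => hk.1 h.symm
      have h2 : k ≠ 0 := hk.2
      simp [hL, h1, h2]
  have hNcol0 : ∀ i : Fin (n+1), N i.succ 0 = 0 := by
    intro i
    rw [hNrow i 0, div_mul_cancel₀ _ h0]
    ring
  rw [← hNdet, Matrix.det_succ_column_zero]
  rw [Finset.sum_eq_single (0 : Fin (n+2))]
  · rw [hNrow0 0]
    simp only [Fin.val_zero, pow_zero, one_mul, Fin.succAbove_zero]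
    have hsub : N.submatrix Fin.succ Fin.succ = Matrix.of fun i j : Fin (n+1) =>
        A i.succ j.succ - A i.succ 0 / A 0 0 * A 0 j.succ := by
      ext i j
      rw [Matrix.submatrix_apply, Matrix.of_apply, hNrow]
    rw [hsub]
  · intro i _ hi
    obtain ⟨i, rfl⟩ := Fin.exists_succ_eq.2 hi
    rw [hNcol0 i]
    ring
  · simp

lemma aux_bound : ∀ (n : ℕ) (ε : ℝ), 0 ≤ ε → ∀ A : Matrix (Fin (n+1)) (Fin (n+1)) ℝ,
    (∀ i j, i ≠ j → |A i j| ≤ ε * |A i i|) →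
    (∏ i, |A i i|) * ((1 - (n : ℝ) * ε) * (1 + ε) ^ n) ≤ |A.det| := by
  intro n
  induction n with
  | zero =>
    intro ε hε A hA
    simp [Matrix.det_fin_one]
  | succ n ih =>
    intro ε hε A hA
    by_cases hbig : 1 ≤ ((n : ℝ) + 1) * ε
    · have h1 : 1 - ((n+1 : ℕ) : ℝ) * ε ≤ 0 := by push_cast; linarith
      have hp : (0:ℝ) ≤ ∏ i, |A i i| := Finset.prod_nonneg fun i _ => abs_nonneg _
      have hq : (0:ℝ) ≤ (1+ε)^(n+1) := by positivity
      calc (∏ i, |A i i|) * ((1 - ((n+1:ℕ):ℝ) * ε) * (1 + ε) ^ (n+1))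
          ≤ 0 := mul_nonpos_of_nonneg_of_nonpos hp
            (mul_nonpos_of_nonpos_of_nonneg h1 hq)
        _ ≤ |A.det| := abs_nonneg _
    · push_neg at hbig
      have hε1 : ε < 1 := by nlinarith
      have h1me : (0:ℝ) < 1 - ε := by linarith
      by_cases h00 : A 0 0 = 0
      · have hrow : ∀ j, A 0 j = 0 := by
          intro j
          by_cases hj : j = 0
          · rw [hj]; exact h00
          · have := hA 0 j (fun h => hj h.symm)
            rw [h00, abs_zero, mul_zero] at this
            exact abs_eq_zero.1 (le_antisymm this (abs_nonneg _))
        have hdet : A.det = 0 := Matrix.det_eq_zero_of_row_eq_zero 0 hrow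
        have hprod : (∏ i, |A i i|) = 0 :=
          Finset.prod_eq_zero (Finset.mem_univ 0) (by simp [h00])
        rw [hdet, hprod, abs_zero, zero_mul]
      · set ε' : ℝ := ε / (1 - ε) with hε'def
        have hε'0 : 0 ≤ ε' := div_nonneg hε (le_of_lt h1me)
        set S : Matrix (Fin (n+1)) (Fin (n+1)) ℝ :=
          Matrix.of fun i j : Fin (n+1) =>
            A i.succ j.succ - A i.succ 0 / A 0 0 * A 0 j.succ with hSdef
        have hpos : 0 < |A 0 0| := abs_pos.2 h00
        have key : ∀ i j : Fin (n+1),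
            |A i.succ 0 / A 0 0 * A 0 j.succ| ≤ ε^2 * |A i.succ i.succ| := by
          intro i j
          have h1 := hA i.succ 0 (Fin.succ_ne_zero i)
          have h2 := hA 0 j.succ (Fin.succ_ne_zero j).symm
          rw [abs_mul, abs_div, div_mul_eq_mul_div, div_le_iff₀ hpos]
          calc |A i.succ 0| * |A 0 j.succ|
              ≤ (ε * |A i.succ i.succ|) * (ε * |A 0 0|) :=
                mul_le_mul h1 h2 (abs_nonneg _) (mul_nonneg hε (abs_nonneg _))
            _ = ε^2 * |A i.succ i.succ| * |A 0 0| := by ring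
        have hdiag : ∀ i : Fin (n+1), (1 - ε^2) * |A i.succ i.succ| ≤ |S i i| := by
          intro i
          have h1 := abs_sub_abs_le_abs_sub (A i.succ i.succ)
            (A i.succ 0 / A 0 0 * A 0 i.succ)
          have h2 := key i i
          have : |S i i| = |A i.succ i.succ - A i.succ 0 / A 0 0 * A 0 i.succ| := rfl
          rw [this]
          linarith
        have hoff : ∀ i j : Fin (n+1), i ≠ j →
            |S i j| ≤ ε * (1 + ε) * |A i.succ i.succ| := by
          intro i j hij
          have h1 := hA i.succ j.succ (fun h => hij (Fin.succ_injective _ h))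
          have h2 := key i j
          have h3 := abs_sub (A i.succ j.succ) (A i.succ 0 / A 0 0 * A 0 j.succ)
          have h4 := hA j.succ i.succ (fun h => hij (Fin.succ_injective _ h).symm)
          have : |S i j| = |A i.succ j.succ - A i.succ 0 / A 0 0 * A 0 j.succ| := rfl
          rw [this]
          nlinarith [abs_nonneg (A i.succ j.succ)]
        have hS : ∀ i j : Fin (n+1), i ≠ j → |S i j| ≤ ε' * |S i i| := by
          intro i j hij
          calc |S i j| ≤ ε * (1 + ε) * |A i.succ i.succ| := hoff i j hij
            _ = ε' * ((1 - ε^2) * |A i.succ i.succ|) := by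
                rw [hε'def]; field_simp; ring
            _ ≤ ε' * |S i i| := mul_le_mul_of_nonneg_left (hdiag i) hε'0
        have step2 := ih ε' hε'0 S hS
        have hF' : 0 ≤ (1 - (n:ℝ) * ε') * (1 + ε')^n := by
          have hnum : (0:ℝ) ≤ 1 - ((n:ℝ)+1) * ε := by linarith
          have : 1 - (n:ℝ) * ε' = (1 - ((n:ℝ)+1)*ε) / (1-ε) := by
            rw [hε'def]; field_simp; ring
          rw [this]
          have h2 : (0:ℝ) ≤ (1+ε')^n := by positivity
          exact mul_nonneg (div_nonneg hnum (le_of_lt h1me)) h2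
        have step1 : (1-ε^2)^(n+1) * (∏ i : Fin (n+1), |A i.succ i.succ|)
            ≤ ∏ i, |S i i| := by
          have heq : ∏ i : Fin (n+1), ((1-ε^2) * |A i.succ i.succ|)
              = (1-ε^2)^(n+1) * ∏ i : Fin (n+1), |A i.succ i.succ| := by
            rw [Finset.prod_mul_distrib, Finset.prod_const]
            simp
          rw [← heq]
          apply Finset.prod_le_prod
          · intro i _
            exact mul_nonneg (by nlinarith) (abs_nonneg _)
          · intro i _
            exact hdiag i
        have hid : (1-ε^2)^(n+1) * ((1 - (n:ℝ)*ε') * (1+ε')^n)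
            = (1 - ((n:ℝ)+1)*ε) * (1+ε)^(n+1) := by
          rw [show (1:ℝ)-ε^2 = (1-ε)*(1+ε) by ring, mul_pow,
            show 1 - (n:ℝ)*ε' = (1-((n:ℝ)+1)*ε)/(1-ε) by rw [hε'def]; field_simp; ring,
            show 1 + ε' = (1-ε)⁻¹ by rw [hε'def]; field_simp; ring]
          rw [inv_pow]
          field_simp
          ring
        calc (∏ i, |A i i|) * ((1 - ((n+1:ℕ):ℝ) * ε) * (1 + ε) ^ (n+1))
            = |A 0 0| * (((1-ε^2)^(n+1) * ∏ i : Fin (n+1), |A i.succ i.succ|)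
                * ((1 - (n:ℝ)*ε') * (1+ε')^n)) := by
              rw [Fin.prod_univ_succ]
              push_cast
              rw [← hid]
              ring
          _ ≤ |A 0 0| * ((∏ i, |S i i|) * ((1 - (n:ℝ)*ε') * (1+ε')^n)) := by
              apply mul_le_mul_of_nonneg_left _ (abs_nonneg _)
              exact mul_le_mul_of_nonneg_right step1 hF'
          _ ≤ |A 0 0| * |S.det| := mul_le_mul_of_nonneg_left step2 (abs_nonneg _)
          _ = |A.det| := by rw [det_elim_step A h00, abs_mul]

theorem abs_det_lower_bound_diag_dominant
    (n : ℕ) (hn : 1 ≤ n) (ε : ℝ) (hε : 0 ≤ ε)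
    (A : Matrix (Fin n) (Fin n) ℝ)
    (hA : ∀ i j, i ≠ j → |A i j| ≤ ε * |A i i|) :
    (∏ i, |A i i|) * ((1 - ((n : ℝ) - 1) * ε) * (1 + ε) ^ (n - 1)) ≤ |A.det| := by
  obtain ⟨m, rfl⟩ : ∃ m, n = m + 1 := ⟨n - 1, by omega⟩
  have := aux_bound m ε hε A hA
  have hcast : ((m + 1 : ℕ) : ℝ) - 1 = (m : ℝ) := by push_cast; ring
  simpa [hcast] using this
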